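/- (Fixed-point lemma.) If δ^i ≠ 0 and δ^i agrees with the unified delta model on its support, i.e. δ^i_k = U_k for every coordinate k with δ^i_k ≠ 0, then M^i ⊙ U = δ^i, λ^i = 1, and one iteration leaves δ^i unchanged: δ̂^i = δ^i. -/
import Mathlib


open Filter

theorem stmt9
    (n d : ℕ) (hn : 1 ≤ n) (hd : 1 ≤ d)
    (δ : Fin n → Fin d → ℝ)
    (γ ε U : Fin d → ℝ)
    (hγ : ∀ k, γ k = Real.sign (∑ i, δ i k))
    (hε : ∀ k, γ k ≠ 0 →
      (∃ i, Real.sign (δ i k) = γ k ∧ |δ i k| = ε k) ∧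
      (∀ i, Real.sign (δ i k) = γ k → |δ i k| ≤ ε k))
    (hε0 : ∀ k, γ k = 0 → ε k = 0)
    (hU : ∀ k, U k = γ k * ε k)
    (M : Fin n → Fin d → ℝ)
    (hM : ∀ i k, M i k = if 0 < δ i k * U k then 1 else 0)
    (lam : Fin n → ℝ)
    (hden : ∀ i, ∑ k, |M i k * U k| ≠ 0)
    (hlam : ∀ i, lam i = (∑ k, |δ i k|) / (∑ k, |M i k * U k|))
    (δhat : Fin n → Fin d → ℝ)
    (hδhat : ∀ i k, δhat i k = lam i * (M i k * U k)) :
    ∀ i : Fin n, δ i ≠ 0 → (∀ k, δ i k ≠ 0 → δ i k = U k) →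
      (∀ k, M i k * U k = δ i k) ∧ lam i = 1 ∧ δhat i = δ i := by
  intro i hne hagree
  have key : ∀ k, M i k * U k = δ i k := by
    intro k
    by_cases h : δ i k = 0
    · have : ¬ 0 < δ i k * U k := by rw [h]; simp
      rw [hM, if_neg this, h, zero_mul]
    · have hU' := hagree k h
      have : 0 < δ i k * U k := by
        rw [← hU']; exact mul_self_pos.mpr h
      rw [hM, if_pos this, one_mul, ← hU']
  refine ⟨key, ?_, ?_⟩
  · have hsum : (∑ k, |M i k * U k|) = ∑ k, |δ i k| := by
      simp [key]
    have hlam1 : lam i = 1 := by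
      rw [hlam, hsum, div_self]
      rw [← hsum]; exact hden i
    exact hlam1
  · have hlam1 : lam i = 1 := by
      rw [hlam]
      have hsum : (∑ k, |M i k * U k|) = ∑ k, |δ i k| := by simp [key]
      rw [hsum, div_self (by rw [← hsum]; exact hden i)]
    funext k
    rw [hδhat, hlam1, one_mul, key]
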